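/- (Pairwise characterization of C-ADMGs.) Let V be a finite set, C = {C_1, …, C_r} a partition of V, and G_C a directed mixed graph on vertex set C with no directed cycle and no self-loops. An ADMG G over V is compatible with G_C (i.e., the cluster graph induced by G on the partition C equals G_C) if and only if all of the following hold: (1) for every directed edge C_i → C_j of G_C, no Y ∈ C_j is an ancestor in G of any X ∈ C_i, and there exist X ∈ C_i, Y ∈ C_j with a directed edge X → Y in G; (2) for every pair such that C_i is an ancestor of C_j in G_C but C_i → C_j is not an edge of G_C, no Y ∈ C_j is an ancestor in G of any X ∈ C_i and there is no directed edge X → Y in G with X ∈ C_i, Y ∈ C_j; (3) for every pair of distinct clusters such that in G_C neither is an ancestor of the other, no X ∈ C_i is an ancestor in G of any Y ∈ C_j and vice versa; (4) for every pair of distinct clusters, C_i ↔ C_j is a bidirected edge of G_C if and only if there exist X ∈ C_i, Y ∈ C_j with a bidirected edge X ↔ Y in G. -/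

import Mathlib

/-- A directed mixed graph over a vertex type `V`: a set of directed edges and a
symmetric set of bidirected edges between distinct vertices. -/
structure DMG (V : Type) where
  dir : V → V → Prop
  bidir : V → V → Prop
  bidir_symm : ∀ x y, bidir x y → bidir y x
  dir_ne : ∀ x y, dir x y → x ≠ y
  bidir_ne : ∀ x y, bidir x y → x ≠ y

namespace DMG

variable {V : Type} {I : Type}

/-- `X` is an ancestor of `Y`: there is a directed path of length ≥ 1 from `X` to `Y`. -/
def Anc (G : DMG V) : V → V → Prop := Relation.TransGen G.dir

/-- No directed cycles. -/
def Acyclic (G : DMG V) : Prop := ∀ x, ¬ G.Anc x x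

/-- No bidirected edges. -/
def NoBidir (G : DMG V) : Prop := ∀ x y, ¬ G.bidir x y

/-- A DAG: no bidirected edges and no directed cycles. -/
def IsDAG (G : DMG V) : Prop := G.Acyclic ∧ G.NoBidir

/-- Two vertices are adjacent if joined by a directed or bidirected edge. -/
def Adj (G : DMG V) (x y : V) : Prop := G.dir x y ∨ G.dir y x ∨ G.bidir x y

/-- Ancestral graph: no directed cycle, no almost directed cycle. -/
def Ancestral (G : DMG V) : Prop :=
  G.Acyclic ∧ ∀ x y, G.bidir x y → ¬ G.Anc x y

/-- The cluster graph induced by `G` on the partition of `V` into the fibers of `π`. -/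
def clusterGraph (G : DMG V) (π : V → I) : DMG I where
  dir i j := i ≠ j ∧ ∃ x y, π x = i ∧ π y = j ∧ G.dir x y
  bidir i j := i ≠ j ∧ ∃ x y, π x = i ∧ π y = j ∧ G.bidir x y
  bidir_symm := by
    rintro i j ⟨hne, x, y, hx, hy, hb⟩
    exact ⟨hne.symm, y, x, hy, hx, G.bidir_symm _ _ hb⟩
  dir_ne := fun _ _ h => h.1
  bidir_ne := fun _ _ h => h.1

/-- `G` is compatible with the cluster graph `GC` (over the partition given by the
fibers of `π`) if the cluster graph induced by `G` equals `GC`. -/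
def CompatibleWith (G : DMG V) (π : V → I) (GC : DMG I) : Prop :=
  (∀ i j, GC.dir i j ↔ (G.clusterGraph π).dir i j) ∧
  (∀ i j, GC.bidir i j ↔ (G.clusterGraph π).bidir i j)

/-- Walks in a directed mixed graph: each consecutive pair of vertices is joined
by a directed edge (in either direction) or a bidirected edge, and we remember
which edge is used. -/
inductive Walk (G : DMG V) : V → V → Type
  | nil (x : V) : Walk G x x
  | fwd {x y z : V} (h : G.dir x y) (w : Walk G y z) : Walk G x z
  | bwd {x y z : V} (h : G.dir y x) (w : Walk G y z) : Walk G x z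
  | bi  {x y z : V} (h : G.bidir x y) (w : Walk G y z) : Walk G x z

namespace Walk

variable {G : DMG V}

/-- The list of vertices visited by a walk. -/
def support : {x y : V} → Walk G x y → List V
  | _, _, .nil x => [x]
  | _, _, .fwd (x := x) _ w => x :: w.support
  | _, _, .bwd (x := x) _ w => x :: w.support
  | _, _, .bi (x := x) _ w => x :: w.support

/-- Whether a walk is trivial. -/
def isNil : {x y : V} → Walk G x y → Bool
  | _, _, .nil _ => true
  | _, _, .fwd _ _ => false
  | _, _, .bwd _ _ => false
  | _, _, .bi _ _ => false

/-- Whether the first edge of the walk has an arrowhead at the first vertex. -/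
def headAtStart : {x y : V} → Walk G x y → Bool
  | _, _, .nil _ => false
  | _, _, .fwd _ _ => false
  | _, _, .bwd _ _ => true
  | _, _, .bi _ _ => true

/-- The internal (non-endpoint) vertices of a walk, each paired with a Boolean
recording whether it is a collider on the walk (both incident edges of the walk
have an arrowhead at it). -/
def marked : {x y : V} → Walk G x y → List (V × Bool)
  | _, _, .nil _ => []
  | _, _, .fwd (y := y) _ w => (if w.isNil then [] else [(y, w.headAtStart)]) ++ w.marked
  | _, _, .bwd (y := y) _ w => (if w.isNil then [] else [(y, false)]) ++ w.marked
  | _, _, .bi (y := y) _ w => (if w.isNil then [] else [(y, w.headAtStart)]) ++ w.marked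

/-- A walk is a path if its vertices are pairwise distinct. -/
def IsPath {x y : V} (w : Walk G x y) : Prop := w.support.Nodup

/-- A walk is blocked by `S` if it contains a non-collider belonging to `S`, or a
collider such that neither the collider nor any of its descendants belongs to `S`. -/
def Blocked {x y : V} (w : Walk G x y) (S : Set V) : Prop :=
  ∃ p ∈ w.marked,
    (p.2 = false ∧ p.1 ∈ S) ∨
    (p.2 = true ∧ p.1 ∉ S ∧ ∀ d, G.Anc p.1 d → d ∉ S)

end Walk

/-- `x` and `y` are m-separated by `S` in `G`: every path between `x` and `y`
is blocked by `S`.  (In a DAG this is d-separation.) -/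
def MSep (G : DMG V) (x y : V) (S : Set V) : Prop :=
  ∀ w : Walk G x y, w.IsPath → w.Blocked S

/-- Vertex sets `A` and `B` are m-separated by `S`. -/
def MSepSets (G : DMG V) (A B S : Set V) : Prop :=
  ∀ x ∈ A, ∀ y ∈ B, G.MSep x y S

/-- The induced subgraph of `G` on a set `A` of vertices. -/
def induce (G : DMG V) (A : Set V) : DMG A where
  dir x y := G.dir x.1 y.1
  bidir x y := G.bidir x.1 y.1
  bidir_symm := fun _ _ h => G.bidir_symm _ _ h
  dir_ne := fun _ _ h he => G.dir_ne _ _ h (congrArg Subtype.val he)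
  bidir_ne := fun _ _ h he => G.bidir_ne _ _ h (congrArg Subtype.val he)

end DMG


lemma anc_cluster {V I : Type} (G : DMG V) (π : V → I) {x y : V} (h : G.Anc x y) :
    π x = π y ∨ (G.clusterGraph π).Anc (π x) (π y) := by
  induction h with
  | single h =>
    rename_i b
    by_cases he : π x = π b
    · exact Or.inl he
    · exact Or.inr (Relation.TransGen.single ⟨he, _, _, rfl, rfl, h⟩)
  | tail _ hd ih =>
    rename_i b c _
    by_cases he : π b = π c
    · rw [he] at ih; exact ih
    · have hedge : (G.clusterGraph π).dir (π b) (π c) := ⟨he, _, _, rfl, rfl, hd⟩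
      rcases ih with h1 | h1
      · exact Or.inr (h1 ▸ Relation.TransGen.single hedge)
      · exact Or.inr (h1.tail hedge)

open DMG in
/-- Pairwise characterization of C-ADMGs: an ADMG `G` is compatible
with a given directed mixed cluster graph `GC` (acyclic, no self-loops) over the
partition given by the fibers of `π` iff conditions (1)–(4) hold. -/
theorem stmt4 {V I : Type} [Fintype V]
    (π : V → I) (hsurj : Function.Surjective π)
    (GC : DMG I) (hGCacyc : GC.Acyclic)
    (G : DMG V) (hG : G.Acyclic) :
    G.CompatibleWith π GC ↔
      ((∀ i j, GC.dir i j →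
          (∀ x y, π x = i → π y = j → ¬ G.Anc y x) ∧
          (∃ x y, π x = i ∧ π y = j ∧ G.dir x y)) ∧
       (∀ i j, GC.Anc i j → ¬ GC.dir i j →
          ∀ x y, π x = i → π y = j → ¬ G.Anc y x ∧ ¬ G.dir x y) ∧
       (∀ i j, i ≠ j → ¬ GC.Anc i j → ¬ GC.Anc j i →
          ∀ x y, π x = i → π y = j → ¬ G.Anc x y ∧ ¬ G.Anc y x) ∧
       (∀ i j, i ≠ j →
          (GC.bidir i j ↔ ∃ x y, π x = i ∧ π y = j ∧ G.bidir x y))) := by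
  constructor
  · rintro ⟨hd, hb⟩
    -- under compatibility, G-ancestry projects to GC-ancestry
    have key : ∀ x y : V, G.Anc x y → π x = π y ∨ GC.Anc (π x) (π y) := by
      intro x y h
      rcases anc_cluster G π h with h1 | h1
      · exact Or.inl h1
      · exact Or.inr (Relation.TransGen.mono (fun a b hab => (hd a b).mpr hab) _ _ h1)
    refine ⟨?_, ?_, ?_, ?_⟩
    · intro i j hij
      obtain ⟨hne, x0, y0, hx0, hy0, hdxy⟩ := (hd i j).mp hij
      refine ⟨?_, x0, y0, hx0, hy0, hdxy⟩
      intro x y hx hy hanc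
      rcases key y x hanc with h1 | h1
      · exact hne (hx ▸ hy ▸ h1.symm)
      · rw [hx, hy] at h1
        exact hGCacyc i (Relation.TransGen.head hij h1)
    · intro i j hanc hnd x y hx hy
      have hne : i ≠ j := fun he => hGCacyc i (he ▸ hanc)
      constructor
      · intro h
        rcases key y x h with h1 | h1
        · exact hne (hx ▸ hy ▸ h1.symm)
        · rw [hx, hy] at h1
          exact hGCacyc i (hanc.trans h1)
      · intro h
        exact hnd ((hd i j).mpr ⟨hne, x, y, hx, hy, h⟩)
    · intro i j hne hij hji x y hx hy
      constructor
      · intro h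
        rcases key x y h with h1 | h1
        · exact hne (hx ▸ hy ▸ h1)
        · exact hij (hx ▸ hy ▸ h1)
      · intro h
        rcases key y x h with h1 | h1
        · exact hne (hx ▸ hy ▸ h1.symm)
        · exact hji (hy ▸ hx ▸ h1)
    · intro i j hne
      rw [hb i j]
      exact ⟨fun h => h.2, fun h => ⟨hne, h⟩⟩
  · rintro ⟨h1, h2, h3, h4⟩
    constructor
    · intro i j
      constructor
      · intro hij
        exact ⟨GC.dir_ne i j hij, (h1 i j hij).2⟩
      · rintro ⟨hne, x, y, hx, hy, hdxy⟩
        by_contra hnd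
        by_cases hij : GC.Anc i j
        · exact ((h2 i j hij hnd x y hx hy).2) hdxy
        · by_cases hji : GC.Anc j i
          · by_cases hdji : GC.dir j i
            · exact (h1 j i hdji).1 y x hy hx (Relation.TransGen.single hdxy)
            · exact (h2 j i hji hdji y x hy hx).1 (Relation.TransGen.single hdxy)
          · exact (h3 i j hne hij hji x y hx hy).1 (Relation.TransGen.single hdxy)
    · intro i j
      constructor
      · intro hij
        exact ⟨GC.bidir_ne i j hij, (h4 i j (GC.bidir_ne i j hij)).mp hij⟩
      · rintro ⟨hne, hx⟩
        exact (h4 i j hne).mpr hx
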